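/- arXiv:2205.00442 — 4 statements merged into one kernel-verified Lean document; each statement's English description precedes it below -/
import Mathlib

section
/- Let (G, H, (g_v), (c_v), a) be a BNPG game with altruism in which G is the complete graph on a vertex set V of size |V| = n, and let k be an integer with 0 < k < n. If there exists a pure strategy Nash equilibrium in which exactly k players play 1, then |R₁(k)| ≥ k, |R₀(k)| ≥ n − k, and |R₀(k) \ R₁(k)| = |V \ R₁(k)|, where R₀(k) := {v ∈ V : Δg_v(k) + a·∑_{u∈N_v} Δg_u(k) ≤ c_v} and R₁(k) := {v ∈ V : Δg_v(k−1) + a·∑_{u∈N_v} Δg_u(k−1) ≥ c_v}. -/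
open Finset

def dg (g : ℕ → ℝ) (t : ℕ) : ℝ := g (t + 1) - g t

def nv {W : Type*} [Fintype W] [DecidableEq W] (G : SimpleGraph W) [DecidableRel G.Adj]
    (x : W → Bool) (v : W) : ℕ :=
  ((G.neighborFinset v).filter (fun u => x u = true)).card

def util {W : Type*} [Fintype W] [DecidableEq W] (G : SimpleGraph W) [DecidableRel G.Adj]
    (N : W → Finset W) (g : W → ℕ → ℝ) (c : W → ℝ) (a : ℝ)
    (x : W → Bool) (v : W) : ℝ :=
  g v ((x v).toNat + nv G x v)
    + a * ∑ u ∈ N v, g u ((x u).toNat + nv G x u)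
    - c v * (x v).toNat

def isPSNE {W : Type*} [Fintype W] [DecidableEq W] (G : SimpleGraph W) [DecidableRel G.Adj]
    (N : W → Finset W) (g : W → ℕ → ℝ) (c : W → ℝ) (a : ℝ) (x : W → Bool) : Prop :=
  ∀ v : W, ∀ b : Bool,
    util G N g c a x v ≥ util G N g c a (Function.update x v b) v

open scoped Classical

/-- In the complete graph, `x_u + n_u` equals the total number of players playing 1. -/
lemma tot_eq {W : Type*} [Fintype W] [DecidableEq W] [inst : DecidableRel (⊤ : SimpleGraph W).Adj]
    (z : W → Bool) (u : W) :
    (z u).toNat + nv ⊤ z u = (Finset.univ.filter (fun v : W => z v = true)).card := by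
  have hnb : (⊤ : SimpleGraph W).neighborFinset u = Finset.univ.erase u := by
    ext w
    simp [SimpleGraph.mem_neighborFinset, SimpleGraph.top_adj, eq_comm]
  have : nv ⊤ z u = ((Finset.univ.erase u).filter (fun v : W => z v = true)).card := by
    unfold nv; rw [hnb]
  rw [this, Finset.filter_erase]
  rcases h : z u with _ | _
  · rw [Finset.erase_eq_of_notMem (by simp [h])]
    simp [h]
  · rw [Finset.card_erase_of_mem (by simp [h])]
    have hpos : 0 < (Finset.univ.filter (fun v : W => z v = true)).card :=
      Finset.card_pos.2 ⟨u, by simp [h]⟩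
    simp [h]
    omega

lemma util_eq {W : Type*} [Fintype W] [DecidableEq W] [inst : DecidableRel (⊤ : SimpleGraph W).Adj]
    (N : W → Finset W) (g : W → ℕ → ℝ) (c : W → ℝ) (a : ℝ) (z : W → Bool) (v : W) :
    util ⊤ N g c a z v =
      g v ((Finset.univ.filter (fun w : W => z w = true)).card)
        + a * ∑ u ∈ N v, g u ((Finset.univ.filter (fun w : W => z w = true)).card)
        - c v * (z v).toNat := by
  unfold util
  rw [tot_eq]
  have h : ∑ u ∈ N v, g u ((z u).toNat + nv ⊤ z u)
      = ∑ u ∈ N v, g u ((Finset.univ.filter (fun w : W => z w = true)).card) :=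
    Finset.sum_congr rfl fun u _ => by rw [tot_eq]
  rw [h]

/-- on the complete graph, if a BNPG game with altruism has a PSNE in
which exactly `k` players play 1 (`0 < k < n = |V|`), then `|R₁(k)| ≥ k`,
`|R₀(k)| ≥ n − k` and `|R₀(k) \ R₁(k)| = |V \ R₁(k)|`. -/
theorem statement1 {W : Type*} [Fintype W] [DecidableEq W]
    (N : W → Finset W) (hN : ∀ v : W, ∀ u ∈ N v, (⊤ : SimpleGraph W).Adj v u)
    (g : W → ℕ → ℝ) (hmono : ∀ v, Monotone (g v)) (hnn : ∀ v t, 0 ≤ g v t)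
    (c : W → ℝ) (hc : ∀ v, 0 ≤ c v) (a : ℝ) (ha : 0 ≤ a)
    (n k : ℕ) (hn : Fintype.card W = n) (hk0 : 0 < k) (hkn : k < n)
    (x : W → Bool)
    (hk : (Finset.univ.filter (fun v : W => x v = true)).card = k)
    (hx : isPSNE ⊤ N g c a x) :
    k ≤ (Finset.univ.filter (fun v : W =>
            c v ≤ dg (g v) (k - 1) + a * ∑ u ∈ N v, dg (g u) (k - 1))).card ∧
    n - k ≤ (Finset.univ.filter (fun v : W =>
            dg (g v) k + a * ∑ u ∈ N v, dg (g u) k ≤ c v)).card ∧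
    ((Finset.univ.filter (fun v : W =>
            dg (g v) k + a * ∑ u ∈ N v, dg (g u) k ≤ c v)) \
        (Finset.univ.filter (fun v : W =>
            c v ≤ dg (g v) (k - 1) + a * ∑ u ∈ N v, dg (g u) (k - 1)))).card =
      (Finset.univ \ (Finset.univ.filter (fun v : W =>
            c v ≤ dg (g v) (k - 1) + a * ∑ u ∈ N v, dg (g u) (k - 1)))).card := by
  set S := Finset.univ.filter (fun v : W => x v = true) with hS
  -- players playing 1 satisfy R₁ condition
  have h1 : ∀ v : W, x v = true →
      c v ≤ dg (g v) (k - 1) + a * ∑ u ∈ N v, dg (g u) (k - 1) := by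
    intro v hv
    have hineq := hx v false
    rw [util_eq, util_eq] at hineq
    have hcard : (Finset.univ.filter
        (fun w : W => Function.update x v false w = true)).card = k - 1 := by
      have : Finset.univ.filter (fun w : W => Function.update x v false w = true)
          = S.erase v := by
        ext w
        by_cases hw : w = v <;> simp [Function.update_apply, hw, hS]
      rw [this, Finset.card_erase_of_mem (by simp [hS, hv]), hk]
    rw [hcard, hk] at hineq
    have hsum : ∑ u ∈ N v, dg (g u) (k - 1)
        = ∑ u ∈ N v, g u ((k-1)+1) - ∑ u ∈ N v, g u (k - 1) := by
      rw [← Finset.sum_sub_distrib]; rfl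
    have hk1 : (k - 1) + 1 = k := by omega
    rw [hk1] at hsum
    have hmul : a * ∑ u ∈ N v, dg (g u) (k - 1)
        = a * ∑ u ∈ N v, g u k - a * ∑ u ∈ N v, g u (k - 1) := by
      rw [hsum]; ring
    have hdv : dg (g v) (k - 1) = g v k - g v (k - 1) := by
      unfold dg; rw [hk1]
    rw [hdv, hmul]
    simp [hv] at hineq
    linarith
  -- players playing 0 satisfy R₀ condition
  have h0 : ∀ v : W, x v = false →
      dg (g v) k + a * ∑ u ∈ N v, dg (g u) k ≤ c v := by
    intro v hv
    have hineq := hx v true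
    rw [util_eq, util_eq] at hineq
    have hcard : (Finset.univ.filter
        (fun w : W => Function.update x v true w = true)).card = k + 1 := by
      have : Finset.univ.filter (fun w : W => Function.update x v true w = true)
          = insert v S := by
        ext w
        by_cases hw : w = v <;> simp [Function.update_apply, hw, hS]
      rw [this, Finset.card_insert_of_notMem (by simp [hS, hv]), hk]
    rw [hcard, hk] at hineq
    have hsum : ∑ u ∈ N v, dg (g u) k
        = ∑ u ∈ N v, g u (k+1) - ∑ u ∈ N v, g u k := by
      rw [← Finset.sum_sub_distrib]; rfl
    have hmul : a * ∑ u ∈ N v, dg (g u) k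
        = a * ∑ u ∈ N v, g u (k+1) - a * ∑ u ∈ N v, g u k := by
      rw [hsum]; ring
    have hdv : dg (g v) k = g v (k+1) - g v k := rfl
    rw [hdv, hmul]
    simp [hv] at hineq
    linarith
  set R1 := Finset.univ.filter (fun v : W =>
      c v ≤ dg (g v) (k - 1) + a * ∑ u ∈ N v, dg (g u) (k - 1)) with hR1
  set R0 := Finset.univ.filter (fun v : W =>
      dg (g v) k + a * ∑ u ∈ N v, dg (g u) k ≤ c v) with hR0
  have hSR1 : S ⊆ R1 := by
    intro v hv
    simp [hS] at hv
    simp [hR1, h1 v hv]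
  have hSc : (Finset.univ.filter (fun v : W => x v = false)) ⊆ R0 := by
    intro v hv
    simp at hv
    simp [hR0, h0 v hv]
  have hcardSc : (Finset.univ.filter (fun v : W => x v = false)).card = n - k := by
    have := Finset.card_filter_add_card_filter_not
      (s := (Finset.univ : Finset W)) (p := fun v : W => x v = true)
    simp only [Finset.card_univ, hn] at this
    have h2 : (Finset.univ.filter (fun v : W => ¬ x v = true))
        = Finset.univ.filter (fun v : W => x v = false) := by
      ext w; simp
    rw [hk, h2] at this
    omega
  refine ⟨?_, ?_, ?_⟩
  · rw [← hk]; exact Finset.card_le_card hSR1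
  · rw [← hcardSc]; exact Finset.card_le_card hSc
  · congr 1
    ext v
    simp only [Finset.mem_sdiff, Finset.mem_univ, true_and]
    constructor
    · rintro ⟨_, h⟩; exact h
    · intro h
      refine ⟨?_, h⟩
      have hvx : x v = false := by
        rcases hb : x v with _ | _
        · rfl
        · exact absurd (hSR1 (by simp [hS, hb])) h
      exact hSc (by simp [hvx])
end

section
/- Let (G=(V,E), p) be a directed public goods game and let ε > 0. Construct the BNPG game with symmetric altruism on V' = {u_in : u∈V} ∪ {u_out : u∈V} with input edges E'' = {{u_in,u_out} : u∈V} ∪ {{u_out,v_in} : (u,v)∈E}, altruistic edges {{u_in,u_out} : u∈V} (so N_{u_in} = {u_out} and N_{u_out} = {u_in}), a = 1, c_{u_in} = 1+2ε, c_{u_out} = p, g_{u_in}(x) = 1 if x > 0 and 0 if x = 0, and g_{u_out}(x) = 0 for all x. Then in every ε-Nash equilibrium (Δ_v)_{v∈V'} of this BNPG game, Δ_{u_in}(0) = 1 for every u ∈ V; indeed, for every u ∈ V and every pure profile x_{−u_in} of the other players, U_{u_in}(0, x_{−u_in}) > U_{u_in}(1, x_{−u_in}) + ε. -/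
open Finset

/-- `Y(0) = 0` and `Y(t) = 1` for `t > 0`. -/
def Y (t : ℕ) : ℝ := if t = 0 then 0 else 1

/-- Probability of the pure profile `x` under the product distribution in which
player `v` deterministically plays `b` and every other player `u` plays 1 with
probability `q u` (and 0 with probability `1 - q u`). -/
def weight {W : Type*} [Fintype W] [DecidableEq W]
    (q : W → ℝ) (v : W) (b : Bool) (x : W → Bool) : ℝ :=
  ∏ u : W, if u = v then (if x u = b then 1 else 0)
    else (if x u then q u else 1 - q u)

/-- Expected utility of player `v` playing `b` in a BNPG game with altruism when the
other players mix independently (`q u` = probability that `u` plays 1). -/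
def expUtil {W : Type*} [Fintype W] [DecidableEq W]
    (G : SimpleGraph W) [DecidableRel G.Adj]
    (N : W → Finset W) (g : W → ℕ → ℝ) (c : W → ℝ) (a : ℝ)
    (q : W → ℝ) (v : W) (b : Bool) : ℝ :=
  ∑ x : W → Bool, weight q v b x * util G N g c a x v

/-- `q` (with `q v` = probability that `v` plays 1) is an `ε`-Nash equilibrium of a
BNPG game with altruism: every strategy in the support of a player's mixed strategy
is an `ε`-best response. -/
def isEpsNE {W : Type*} [Fintype W] [DecidableEq W]
    (G : SimpleGraph W) [DecidableRel G.Adj]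
    (N : W → Finset W) (g : W → ℕ → ℝ) (c : W → ℝ) (a : ℝ)
    (q : W → ℝ) (ε : ℝ) : Prop :=
  (∀ v : W, 0 ≤ q v ∧ q v ≤ 1) ∧
  ∀ v : W,
    (0 < q v → ∀ b : Bool,
      expUtil G N g c a q v true ≥ expUtil G N g c a q v b - ε) ∧
    (q v < 1 → ∀ b : Bool,
      expUtil G N g c a q v false ≥ expUtil G N g c a q v b - ε)

section Construction

variable {V : Type*} [Fintype V] [DecidableEq V]

/-- Adjacency (as a Boolean function) of the input network of the constructed BNPG
game: `Sum.inl u` is `u_in`, `Sum.inr u` is `u_out`; `w_in` is adjacent to `u_out`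
iff `w = u` or `(u,w)` is an edge of the directed public goods game. -/
def adjPG (A : V → V → Prop) [DecidableRel A] : V ⊕ V → V ⊕ V → Bool
  | Sum.inl win, Sum.inr uout => decide (win = uout) || decide (A uout win)
  | Sum.inr uout, Sum.inl win => decide (win = uout) || decide (A uout win)
  | _, _ => false

/-- Input network of the constructed BNPG game. -/
def GPG (A : V → V → Prop) [DecidableRel A] : SimpleGraph (V ⊕ V) where
  Adj a b := adjPG A a b = true
  symm := ⟨by rintro (u | u) (w | w) h <;> simp_all [adjPG]⟩
  loopless := ⟨by rintro (u | u) h <;> simp [adjPG] at h⟩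

instance (A : V → V → Prop) [DecidableRel A] : DecidableRel (GPG A).Adj :=
  fun a b => inferInstanceAs (Decidable (adjPG A a b = true))

/-- Altruistic network: `u_in` and `u_out` are altruistically linked. -/
def NPG : V ⊕ V → Finset (V ⊕ V)
  | Sum.inl u => {Sum.inr u}
  | Sum.inr u => {Sum.inl u}

/-- Externality functions: `g_{u_in}(x) = 1` iff `x > 0`, and `g_{u_out} ≡ 0`. -/
def gPG : V ⊕ V → ℕ → ℝ
  | Sum.inl _ => fun t => if t = 0 then 0 else 1
  | Sum.inr _ => fun _ => 0

/-- Costs: `c_{u_in} = 1 + 2ε` and `c_{u_out} = p`. -/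
def cPG (p ε : ℝ) : V ⊕ V → ℝ
  | Sum.inl _ => 1 + 2 * ε
  | Sum.inr _ => p

end Construction

section Helpers

variable {W : Type*} [Fintype W] [DecidableEq W]

lemma weight_eq_zero (q : W → ℝ) (v : W) (b : Bool) (x : W → Bool) (h : ¬ x v = b) :
    weight q v b x = 0 := by
  unfold weight
  apply Finset.prod_eq_zero (Finset.mem_univ v)
  simp [h]

lemma weight_nonneg (q : W → ℝ) (hq : ∀ u, 0 ≤ q u ∧ q u ≤ 1) (v : W) (b : Bool)
    (x : W → Bool) : 0 ≤ weight q v b x := by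
  unfold weight
  apply Finset.prod_nonneg
  intro u _
  rcases hq u with ⟨h0, h1⟩
  split_ifs <;> linarith

lemma weight_update (q : W → ℝ) (v : W) (b b' : Bool) (x : W → Bool) :
    weight q v b (Function.update x v b) = weight q v b' (Function.update x v b') := by
  unfold weight
  apply Finset.prod_congr rfl
  intro u _
  by_cases h : u = v
  · subst h; simp
  · simp [h, Function.update_of_ne h]

lemma sum_weight (q : W → ℝ) (v : W) (b : Bool) :
    ∑ x : W → Bool, weight q v b x = 1 := by
  unfold weight
  rw [← Fintype.piFinset_univ,
    (Finset.prod_univ_sum (fun _ : W => (Finset.univ : Finset Bool))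
      (fun u t => if u = v then (if t = b then (1 : ℝ) else 0)
        else (if t then q u else 1 - q u))).symm]
  apply Finset.prod_eq_one
  intro u _
  by_cases h : u = v
  · subst h
    simp only [if_pos rfl]
    cases b <;> simp
  · simp only [if_neg h, Fintype.sum_bool]
    norm_num

/-- The key expected-utility gap lemma: if playing 0 pointwise beats playing 1 by
at least `δ`, the same holds in expectation. -/
lemma expUtil_gap (G : SimpleGraph W) [DecidableRel G.Adj] (N : W → Finset W)
    (g : W → ℕ → ℝ) (c : W → ℝ) (a : ℝ) (q : W → ℝ)
    (hq : ∀ u, 0 ≤ q u ∧ q u ≤ 1) (v : W) (δ : ℝ)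
    (hd : ∀ x : W → Bool,
      util G N g c a (Function.update x v false) v ≥
        util G N g c a (Function.update x v true) v + δ) :
    expUtil G N g c a q v false ≥ expUtil G N g c a q v true + δ := by
  have hS : ∀ b : Bool, expUtil G N g c a q v b =
      ∑ x ∈ Finset.univ.filter (fun x : W → Bool => x v = b),
        weight q v b x * util G N g c a x v := by
    intro b
    unfold expUtil
    rw [Finset.sum_filter_of_ne]
    intro x _ hx
    by_contra hne
    rw [weight_eq_zero q v b x hne, zero_mul] at hx
    exact hx rfl
  have htrue : expUtil G N g c a q v true =
      ∑ x ∈ Finset.univ.filter (fun x : W → Bool => x v = false),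
        weight q v false x * util G N g c a (Function.update x v true) v := by
    rw [hS true]
    apply Finset.sum_nbij' (fun y => Function.update y v false)
      (fun x => Function.update x v true)
    · intro y hy; simp
    · intro x hx; simp
    · intro y hy
      simp only [Finset.mem_filter, Finset.mem_univ, true_and] at hy
      rw [Function.update_idem, ← hy, Function.update_eq_self]
    · intro x hx
      simp only [Finset.mem_filter, Finset.mem_univ, true_and] at hx
      rw [Function.update_idem, ← hx, Function.update_eq_self]
    · intro y hy
      simp only [Finset.mem_filter, Finset.mem_univ, true_and] at hy
      have h1 : Function.update y v true = y := by rw [← hy, Function.update_eq_self]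
      rw [Function.update_idem, h1]
      congr 1
      rw [← h1, weight_update q v true false, Function.update_idem]
  have hfalse : expUtil G N g c a q v false =
      ∑ x ∈ Finset.univ.filter (fun x : W → Bool => x v = false),
        weight q v false x * util G N g c a (Function.update x v false) v := by
    rw [hS false]
    apply Finset.sum_congr rfl
    intro x hx
    simp only [Finset.mem_filter, Finset.mem_univ, true_and] at hx
    rw [← hx, Function.update_eq_self]
  have hw1 : ∑ x ∈ Finset.univ.filter (fun x : W → Bool => x v = false),
      weight q v false x = 1 := by
    rw [Finset.sum_filter_of_ne, sum_weight]
    intro x _ hx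
    by_contra hne
    exact hx (weight_eq_zero q v false x hne)
  rw [htrue, hfalse]
  calc ∑ x ∈ Finset.univ.filter (fun x : W → Bool => x v = false),
        weight q v false x * util G N g c a (Function.update x v false) v
      ≥ ∑ x ∈ Finset.univ.filter (fun x : W → Bool => x v = false),
        (weight q v false x * util G N g c a (Function.update x v true) v
          + weight q v false x * δ) := by
        apply Finset.sum_le_sum
        intro x _
        have := hd x
        have hwn := weight_nonneg q hq v false x
        nlinarith
    _ = (∑ x ∈ Finset.univ.filter (fun x : W → Bool => x v = false),
          weight q v false x * util G N g c a (Function.update x v true) v) + δ := by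
        rw [Finset.sum_add_distrib, ← Finset.sum_mul, hw1, one_mul]

lemma nv_update (G : SimpleGraph W) [DecidableRel G.Adj] (x : W → Bool) (v : W) (b : Bool) :
    nv G (Function.update x v b) v = nv G x v := by
  unfold nv
  congr 1
  apply Finset.filter_congr
  intro u hu
  rw [SimpleGraph.mem_neighborFinset] at hu
  rw [Function.update_of_ne hu.ne']

end Helpers

/-- in every `ε`-Nash equilibrium of the BNPG game with (symmetric)
altruism constructed from a directed public goods game `(A, p)`, every player `u_in`
plays 0 with probability 1; indeed against every pure profile of the other players,
playing 0 is better than playing 1 by more than `ε`. -/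
theorem statement8 {V : Type*} [Fintype V] [DecidableEq V]
    (A : V → V → Prop) [DecidableRel A] (p ε : ℝ) (hε : 0 < ε)
    (q : V ⊕ V → ℝ)
    (hq : isEpsNE (GPG A) NPG gPG (cPG p ε) 1 q ε) :
    (∀ u : V, q (Sum.inl u) = 0) ∧
    (∀ u : V, ∀ x : V ⊕ V → Bool,
      util (GPG A) NPG gPG (cPG p ε) 1
          (Function.update x (Sum.inl u) false) (Sum.inl u) >
        util (GPG A) NPG gPG (cPG p ε) 1
          (Function.update x (Sum.inl u) true) (Sum.inl u) + ε) := by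
  have key : ∀ u : V, ∀ x : V ⊕ V → Bool,
      util (GPG A) NPG gPG (cPG p ε) 1
          (Function.update x (Sum.inl u) false) (Sum.inl u) ≥
        util (GPG A) NPG gPG (cPG p ε) 1
          (Function.update x (Sum.inl u) true) (Sum.inl u) + 2 * ε := by
    intro u x
    unfold util
    simp only [NPG, gPG, cPG, Finset.sum_singleton, Function.update_self,
      nv_update, Bool.toNat_true, Bool.toNat_false, mul_zero, mul_one,
      Nat.zero_add, Nat.add_eq_zero, one_ne_zero, false_and, if_false]
    split_ifs <;> push_cast <;> linarith
  constructor
  · intro u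
    rcases hq with ⟨hq01, hqne⟩
    rcases (hq01 (Sum.inl u)) with ⟨h0, _⟩
    by_contra hne
    have hpos : 0 < q (Sum.inl u) := lt_of_le_of_ne h0 (Ne.symm hne)
    have hbr := (hqne (Sum.inl u)).1 hpos false
    have hgap := expUtil_gap (GPG A) NPG gPG (cPG p ε) 1 q hq01 (Sum.inl u)
      (2 * ε) (key u)
    linarith
  · intro u x
    have := key u x
    linarith
end

section
/- Let (G=(V,E), p) be a directed public goods game and ε > 0, and consider the constructed BNPG game with symmetric altruism on V' = {u_in, u_out : u∈V} with input edges {{u_in,u_out} : u∈V} ∪ {{u_out,v_in} : (u,v)∈E}, altruistic edges {{u_in,u_out} : u∈V}, a = 1, c_{u_in} = 1+2ε, c_{u_out} = p, g_{u_in}(x) = 1 if x > 0 and 0 if x = 0, and g_{u_out} ≡ 0. Then for every pure strategy profile x = (x_w)_{w∈V'} satisfying x_{u_in} = 0 for all u ∈ V, and for every v ∈ V, the BNPG utility of v_out equals the directed public goods utility of v: U_{v_out}(x) = Y(x'_v + n'^{in}_v) − p·x'_v, where x'_u := x_{u_out} for all u ∈ V and n'^{in}_v is the number of in-neighbors u of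 v in G with x'_u = 1. -/
open Finset

/-- in the BNPG game constructed from a directed public goods game
`(A, p)`, for every pure profile in which all the `u_in` players play 0, the BNPG
utility of `v_out` equals the directed public goods utility of `v` under the induced
profile `x' u = x u_out`. -/
theorem statement9 {V : Type*} [Fintype V] [DecidableEq V]
    (A : V → V → Prop) [DecidableRel A] (p ε : ℝ) (hε : 0 < ε)
    (x : V ⊕ V → Bool) (hx : ∀ u : V, x (Sum.inl u) = false) :
    ∀ v : V,
      util (GPG A) NPG gPG (cPG p ε) 1 x (Sum.inr v) =
        Y ((x (Sum.inr v)).toNat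
            + (Finset.univ.filter (fun u : V => A u v ∧ x (Sum.inr u) = true)).card)
          - p * (x (Sum.inr v)).toNat := by
  intro v
  simp only [util, NPG, gPG, cPG, Finset.sum_singleton, hx, Bool.toNat_false, zero_add,
    one_mul, Y]
  have key : (nv (GPG A) x (Sum.inl v) = 0) ↔
      ((x (Sum.inr v)).toNat +
        (Finset.univ.filter (fun u : V => A u v ∧ x (Sum.inr u) = true)).card = 0) := by
    simp only [nv, Finset.card_eq_zero, Nat.add_eq_zero, Finset.filter_eq_empty_iff,
      SimpleGraph.mem_neighborFinset, Finset.mem_univ, true_implies, Bool.toNat_eq_zero]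
    constructor
    · intro h
      refine ⟨?_, fun u hu => ?_⟩
      · by_contra hb
        exact @h (Sum.inr v) (by simp [GPG, adjPG]) (by simpa using hb)
      · exact @h (Sum.inr u) (by simp [GPG, adjPG, hu.1]) hu.2
    · rintro ⟨h1, h2⟩ w hw hxw
      rcases w with u | u
      · simp [GPG, adjPG] at hw
      · simp [GPG, adjPG] at hw
        rcases hw with rfl | hA
        · exact absurd hxw (by simp [h1])
        · exact h2 ⟨hA, hxw⟩ 
  by_cases h : nv (GPG A) x (Sum.inl v) = 0
  · rw [if_pos h, if_pos (key.mp h)]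
  · rw [if_neg h, if_neg (fun hc => h (key.mpr hc))]
end

section
/- Let n ≥ 1, let g_{v_1}, …, g_{v_n} : ℕ → ℝ be nondecreasing functions, and let c ≥ 0. Define f(x) := 1 + ⌊(x−2)/n⌋ and h(x) := x − (2 + n·(f(x)−1)), and define g : ℕ → ℝ recursively by g(x) = c·x for x ∈ {0,1,2} and g(x) = g(x−1) + Δg_{v_{f(x−1)}}(h(x−1)) for x > 2. Then: (i) Δg(0) = Δg(1) = c; (ii) g is nondecreasing; and (iii) for every i ∈ [n] and every integer t with 0 ≤ t ≤ n−1, Δg(2 + n·(i−1) + t) = Δg_{v_i}(t) = g_{v_i}(t+1) − g_{v_i}(t). -/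
/-- `f(x) = 1 + ⌊(x−2)/n⌋`. -/
def fIdx (n x : ℕ) : ℕ := 1 + (x - 2) / n

/-- `h(x) = x − (2 + n(f(x)−1))`. -/
def hOff (n x : ℕ) : ℕ := x - (2 + n * (fIdx n x - 1))

/-- The common externality function of the fully homogeneous game:
`g(x) = c·x` for `x ∈ {0,1,2}` and `g(x) = g(x−1) + Δg_{v_{f(x−1)}}(h(x−1))` for
`x > 2`, where the family `(g_{v_i})_i` is given by `gv`. -/
def gg (n : ℕ) (gv : ℕ → ℕ → ℝ) (c : ℝ) : ℕ → ℝ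
  | 0 => 0
  | 1 => c
  | 2 => c * 2
  | x + 3 => gg n gv c (x + 2) + dg (gv (fIdx n (x + 2))) (hOff n (x + 2))

lemma dg_gg_step (n : ℕ) (gv : ℕ → ℕ → ℝ) (c : ℝ) (x : ℕ) :
    dg (gg n gv c) (x + 2) = dg (gv (fIdx n (x + 2))) (hOff n (x + 2)) := by
  show gg n gv c (x + 3) - gg n gv c (x + 2) = _
  rw [gg]; ring

/-- for `n ≥ 1`, nondecreasing functions `g_{v_1}, …, g_{v_n}` and
`c ≥ 0`, the recursively defined `g` satisfies: (i) `Δg(0) = Δg(1) = c`;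
(ii) `g` is nondecreasing; (iii) `Δg(2 + n(i−1) + t) = Δg_{v_i}(t)` for every
`i ∈ [n]` and `0 ≤ t ≤ n−1`. -/
theorem statement11 (n : ℕ) (hn : 1 ≤ n) (gv : ℕ → ℕ → ℝ)
    (hmono : ∀ i, Monotone (gv i)) (c : ℝ) (hc : 0 ≤ c) :
    (dg (gg n gv c) 0 = c ∧ dg (gg n gv c) 1 = c) ∧
    Monotone (gg n gv c) ∧
    (∀ i : ℕ, 1 ≤ i → i ≤ n → ∀ t : ℕ, t ≤ n - 1 →
      dg (gg n gv c) (2 + n * (i - 1) + t) = dg (gv i) t) := by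
  refine ⟨⟨by simp [dg, gg], by simp [dg, gg]; ring⟩, ?_, ?_⟩
  · apply monotone_nat_of_le_succ
    intro x
    have h : 0 ≤ dg (gg n gv c) x := by
      match x with
      | 0 => simpa [dg, gg] using hc
      | 1 => simp [dg, gg]; nlinarith
      | (y + 2) =>
        rw [dg_gg_step]
        exact sub_nonneg.2 (hmono _ (Nat.le_succ _))
    simpa [dg, sub_nonneg] using h
  · intro i hi1 hin t ht
    have htn : t < n := lt_of_le_of_lt ht (Nat.sub_lt (by omega) one_pos)
    have hx : 2 + n * (i - 1) + t = (n * (i - 1) + t) + 2 := by ring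
    rw [hx, dg_gg_step]
    have hf : fIdx n (n * (i - 1) + t + 2) = i := by
      unfold fIdx
      have : (n * (i - 1) + t + 2 - 2) = n * (i - 1) + t := by omega
      rw [this, Nat.mul_add_div (by omega), Nat.div_eq_of_lt htn]
      omega
    have hh : hOff n (n * (i - 1) + t + 2) = t := by
      unfold hOff
      rw [hf]
      omega
    rw [hf, hh]
end
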